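/- arXiv:2210.02510 — 2 statements merged into one kernel-verified Lean document; each statement's English description precedes it below -/
import Mathlib

section
/- Let η : Ω → ℝ be a C¹ function with η(x₁,0) = 0 for all x₁ and with ∂₂η square integrable. Then for all R ∈ (0,1), ∫_{Ω_R} η² ≤ 16 R⁴ ∫_{Ω_R} |∂₂η|², where Ω_R = {(x₁,x₂) ∈ Ω : -1 < x₁ < -1+R}. -/
open Set MeasureTheory

private lemma rpow_half_sq {x : ℝ} (hx : 0 ≤ x) : (x ^ ((1:ℝ)/2)) ^ 2 = x := by
  rw [← Real.rpow_natCast (x ^ ((1:ℝ)/2)) 2, ← Real.rpow_mul hx]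
  norm_num

/-- Poincaré inequality on a symmetric interval for a C¹ function vanishing at 0. -/
private lemma slice_bound (g : ℝ → ℝ) (a : ℝ) (ha : 0 < a)
    (hd : ∀ y ∈ Ioo (-a) a, HasDerivAt g (deriv g y) y)
    (hc : ContinuousOn (deriv g) (Ioo (-a) a))
    (h0 : g 0 = 0)
    (h1 : IntegrableOn (fun y => g y ^ 2) (Ioo (-a) a))
    (h2 : IntegrableOn (fun y => deriv g y ^ 2) (Ioo (-a) a)) :
    ∫ y in Ioo (-a) a, g y ^ 2 ≤ a ^ 2 * ∫ y in Ioo (-a) a, deriv g y ^ 2 := by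
  have h0mem : (0:ℝ) ∈ Ioo (-a) a := ⟨by linarith, ha⟩
  set J := ∫ y in Ioo (-a) a, deriv g y ^ 2 with hJdef
  have hJ0 : 0 ≤ J := setIntegral_nonneg measurableSet_Ioo (fun y _ => sq_nonneg _)
  have key : ∀ y ∈ Ioo (-a) a, g y ^ 2 ≤ |y| * J := by
    intro y hy
    have hsub : uIcc (0:ℝ) y ⊆ Ioo (-a) a :=
      (ordConnected_Ioo).uIcc_subset h0mem hy
    have hcont : ContinuousOn (deriv g) (uIcc (0:ℝ) y) := hc.mono hsub
    have hftc : ∫ t in (0:ℝ)..y, deriv g t = g y - g 0 :=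
      intervalIntegral.integral_eq_sub_of_hasDerivAt (fun t ht => hd t (hsub ht))
        hcont.intervalIntegrable
    set s : Set ℝ := Set.uIoc (0:ℝ) y with hsdef
    have hsm : MeasurableSet s := measurableSet_uIoc
    have hssub : s ⊆ Ioo (-a) a := Set.uIoc_subset_uIcc.trans hsub
    have hμs : (volume s).toReal = |y| := by
      rw [hsdef, uIoc, Real.volume_Ioc, max_sub_min_eq_abs, ENNReal.toReal_ofReal (abs_nonneg _)]
      simp [abs_sub_comm]
    haveI : IsFiniteMeasure (volume.restrict s) := by
      constructor
      rw [Measure.restrict_apply_univ, hsdef, uIoc, Real.volume_Ioc]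
      exact ENNReal.ofReal_lt_top
    have hgy : |g y| ≤ ∫ t in s, |deriv g t| := by
      have h1' : |g y| = |∫ t in (0:ℝ)..y, deriv g t| := by rw [hftc, h0, sub_zero]
      rw [h1', intervalIntegral.abs_integral_eq_abs_integral_uIoc]
      calc |∫ t in Set.uIoc (0:ℝ) y, deriv g t| = ‖∫ t in Set.uIoc (0:ℝ) y, deriv g t‖ :=
            (Real.norm_eq_abs _).symm
        _ ≤ ∫ t in Set.uIoc (0:ℝ) y, ‖deriv g t‖ := norm_integral_le_integral_norm _
        _ = ∫ t in s, |deriv g t| := by simp [hsdef, Real.norm_eq_abs]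
    obtain ⟨C, hC⟩ := isCompact_uIcc.exists_bound_of_continuousOn hcont
    have hmeas : AEStronglyMeasurable (deriv g) (volume.restrict s) :=
      (hc.mono hssub).aestronglyMeasurable hsm
    have hmem : MemLp (fun t => |deriv g t|) (ENNReal.ofReal 2) (volume.restrict s) := by
      have hmeasabs : AEStronglyMeasurable (fun t => |deriv g t|) (volume.restrict s) := by
        simpa [Real.norm_eq_abs] using hmeas.norm
      refine MemLp.of_bound hmeasabs C ?_
      refine (ae_restrict_iff' hsm).2 (Filter.Eventually.of_forall fun t ht => ?_)
      rw [Real.norm_eq_abs, abs_abs]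
      have := hC t (Set.uIoc_subset_uIcc ht)
      rwa [Real.norm_eq_abs] at this
    have hpq : Real.HolderConjugate 2 2 := Real.HolderConjugate.two_two
    have hold := integral_mul_le_Lp_mul_Lq_of_nonneg (μ := volume.restrict s) hpq
        (Filter.Eventually.of_forall fun t => abs_nonneg _)
        (Filter.Eventually.of_forall fun t => zero_le_one)
        hmem (memLp_const (1:ℝ))
    have habs2 : ∀ x : ℝ, |x| ^ (2:ℝ) = x ^ 2 := fun x => by
      rw [show (2:ℝ) = ((2:ℕ):ℝ) from by norm_num, Real.rpow_natCast, sq_abs]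
    set K := ∫ t in s, deriv g t ^ 2 with hKdef
    have hK0 : 0 ≤ K := setIntegral_nonneg hsm (fun t _ => sq_nonneg _)
    have hold' : ∫ t in s, |deriv g t| ≤ K ^ ((1:ℝ)/2) * |y| ^ ((1:ℝ)/2) := by
      have e1 : ∫ t in s, |deriv g t| * 1 = ∫ t in s, |deriv g t| := by simp
      have e2 : ∫ t in s, |deriv g t| ^ (2:ℝ) = K := by
        rw [hKdef]; exact setIntegral_congr_fun hsm (fun t _ => habs2 _)
      have e3 : ∫ t in s, (1:ℝ) ^ (2:ℝ) = |y| := by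
        simp [Real.one_rpow, hμs, Measure.real]
      rw [e1, e2, e3] at hold
      exact hold
    have hKJ : K ≤ J := setIntegral_mono_set h2
        (Filter.Eventually.of_forall fun t => sq_nonneg _)
        (HasSubset.Subset.eventuallyLE hssub)
    have hint_nonneg : 0 ≤ ∫ t in s, |deriv g t| :=
      setIntegral_nonneg hsm (fun t _ => abs_nonneg _)
    have hsq : g y ^ 2 ≤ K * |y| := by
      have b1 : g y ^ 2 ≤ (∫ t in s, |deriv g t|) ^ 2 := by
        rw [← sq_abs (g y)]
        exact pow_le_pow_left₀ (abs_nonneg _) hgy 2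
      have b2 : (∫ t in s, |deriv g t|) ^ 2 ≤ (K ^ ((1:ℝ)/2) * |y| ^ ((1:ℝ)/2)) ^ 2 :=
        pow_le_pow_left₀ hint_nonneg hold' 2
      have b3 : (K ^ ((1:ℝ)/2) * |y| ^ ((1:ℝ)/2)) ^ 2 = K * |y| := by
        rw [mul_pow, rpow_half_sq hK0, rpow_half_sq (abs_nonneg y)]
      linarith
    calc g y ^ 2 ≤ K * |y| := hsq
      _ ≤ J * |y| := mul_le_mul_of_nonneg_right hKJ (abs_nonneg y)
      _ = |y| * J := mul_comm _ _
  have hInt2 : IntegrableOn (fun y => |y| * J) (Ioo (-a) a) :=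
    ((continuous_abs.mul continuous_const).integrableOn_Icc).mono_set Ioo_subset_Icc_self
  have habsint : ∫ y in Ioo (-a) a, |y| = a ^ 2 := by
    have e0 : ∫ y in Ioo (-a) a, |y| = ∫ y in (-a)..a, |y| := by
      rw [intervalIntegral.integral_of_le (by linarith), integral_Ioc_eq_integral_Ioo]
    have hsplit : ∫ y in (-a)..(a:ℝ), |y| = (∫ y in (-a)..(0:ℝ), |y|) + ∫ y in (0:ℝ)..a, |y| :=
      (intervalIntegral.integral_add_adjacent_intervals
        (continuous_abs.intervalIntegrable _ _) (continuous_abs.intervalIntegrable _ _)).symm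
    have e1 : ∫ y in (-a)..(0:ℝ), |y| = a ^ 2 / 2 := by
      have hcg : EqOn (fun y : ℝ => |y|) (fun y : ℝ => -y) (uIcc (-a) 0) := by
        intro y hy
        rw [uIcc_of_le (by linarith : -a ≤ (0:ℝ))] at hy
        exact abs_of_nonpos hy.2
      rw [intervalIntegral.integral_congr hcg, intervalIntegral.integral_neg, integral_id]
      ring
    have e2 : ∫ y in (0:ℝ)..a, |y| = a ^ 2 / 2 := by
      have hcg : EqOn (fun y : ℝ => |y|) (fun y : ℝ => y) (uIcc 0 a) := by
        intro y hy
        rw [uIcc_of_le (by linarith : (0:ℝ) ≤ a)] at hy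
        exact abs_of_nonneg hy.1
      rw [intervalIntegral.integral_congr hcg, integral_id]
      ring
    rw [e0, hsplit, e1, e2]; ring
  calc ∫ y in Ioo (-a) a, g y ^ 2
      ≤ ∫ y in Ioo (-a) a, |y| * J :=
        setIntegral_mono_on h1 hInt2 measurableSet_Ioo key
    _ = (∫ y in Ioo (-a) a, |y|) * J := integral_mul_const _ _
    _ = a ^ 2 * J := by rw [habsint]

/-- Fubini for the region between the graphs of `-f` and `f` over a measurable base `I`. -/
private lemma fubini_slice {f : ℝ → ℝ} (hfc : Continuous f) {I : Set ℝ} (hI : MeasurableSet I)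
    {G : ℝ × ℝ → ℝ}
    (hG : IntegrableOn G {p : ℝ × ℝ | p.1 ∈ I ∧ -f p.1 < p.2 ∧ p.2 < f p.1}) :
    (∫ p in {p : ℝ × ℝ | p.1 ∈ I ∧ -f p.1 < p.2 ∧ p.2 < f p.1}, G p)
      = (∫ x in I, ∫ y in Ioo (-f x) (f x), G (x, y))
    ∧ (∀ᵐ x ∂(volume.restrict I), IntegrableOn (fun y => G (x, y)) (Ioo (-f x) (f x)))
    ∧ IntegrableOn (fun x => ∫ y in Ioo (-f x) (f x), G (x, y)) I := by
  set S : Set (ℝ × ℝ) := {p : ℝ × ℝ | p.1 ∈ I ∧ -f p.1 < p.2 ∧ p.2 < f p.1} with hSdef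
  have hSm : MeasurableSet S := by
    have h1 : MeasurableSet {p : ℝ × ℝ | p.1 ∈ I} := measurable_fst hI
    have h2 : IsOpen {p : ℝ × ℝ | -f p.1 < p.2} :=
      isOpen_lt ((hfc.comp continuous_fst).neg) continuous_snd
    have h3 : IsOpen {p : ℝ × ℝ | p.2 < f p.1} :=
      isOpen_lt continuous_snd (hfc.comp continuous_fst)
    exact h1.inter (h2.measurableSet.inter h3.measurableSet)
  have hGi : Integrable (S.indicator G) volume := (integrable_indicator_iff hSm).2 hG
  rw [Measure.volume_eq_prod] at hGi
  have hindI : ∀ x ∈ I, (fun y => S.indicator G (x, y))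
      = (Ioo (-f x) (f x)).indicator (fun y => G (x, y)) := by
    intro x hx; funext y
    by_cases hy : y ∈ Ioo (-f x) (f x)
    · rw [indicator_of_mem hy, indicator_of_mem (show (x, y) ∈ S from ⟨hx, hy.1, hy.2⟩)]
    · rw [indicator_of_notMem hy,
        indicator_of_notMem (fun hmem => hy ⟨hmem.2.1, hmem.2.2⟩)]
  have hindO : ∀ x ∉ I, (fun y => S.indicator G (x, y)) = fun _ => (0:ℝ) := by
    intro x hx; funext y
    exact indicator_of_notMem (fun hmem => hx hmem.1) _
  have hinner : ∀ x, (∫ y, S.indicator G (x, y))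
      = I.indicator (fun x => ∫ y in Ioo (-f x) (f x), G (x, y)) x := by
    intro x
    by_cases hx : x ∈ I
    · rw [indicator_of_mem hx, hindI x hx]
      exact integral_indicator measurableSet_Ioo
    · rw [indicator_of_notMem hx, hindO x hx, integral_zero]
  refine ⟨?_, ?_, ?_⟩
  · rw [← integral_indicator hSm, Measure.volume_eq_prod, integral_prod _ hGi]
    calc (∫ x, ∫ y, S.indicator G (x, y))
        = ∫ x, I.indicator (fun x => ∫ y in Ioo (-f x) (f x), G (x, y)) x :=
          integral_congr_ae (Filter.Eventually.of_forall hinner)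
      _ = ∫ x in I, ∫ y in Ioo (-f x) (f x), G (x, y) := integral_indicator hI
  · have hae := hGi.prod_right_ae
    filter_upwards [ae_restrict_of_ae hae, ae_restrict_mem hI] with x hx hxI
    rw [hindI x hxI] at hx
    exact (integrable_indicator_iff measurableSet_Ioo).1 hx
  · have hA : Integrable (fun x => ∫ y, S.indicator G (x, y)) volume := hGi.integral_prod_left
    exact (integrable_indicator_iff hI).1 (hA.congr (Filter.Eventually.of_forall hinner))

/-- If η is C¹ on the cusp domain Ω, vanishes on {x₂ = 0}, and ∂₂η is
square integrable, then for all R ∈ (0,1),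
∫_{Ω_R} η² ≤ 16 R⁴ ∫_{Ω_R} |∂₂η|², where Ω_R = {(x₁,x₂) ∈ Ω : -1 < x₁ < -1+R}. -/
theorem stmt2 (f : ℝ → ℝ) (hf : ∀ t, f t = (t - 1) ^ 2 * (t + 1) ^ 2)
    (Ω : Set (ℝ × ℝ))
    (hΩ : Ω = {p : ℝ × ℝ | -1 < p.1 ∧ p.1 < 1 ∧ -f p.1 < p.2 ∧ p.2 < f p.1})
    (η : ℝ × ℝ → ℝ) (hη : ContDiffOn ℝ 1 η Ω)
    (h0 : ∀ x₁ ∈ Ioo (-1 : ℝ) 1, η (x₁, 0) = 0)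
    (hint : IntegrableOn (fun p => (deriv (fun s => η (p.1, s)) p.2) ^ 2) Ω)
    (hint' : IntegrableOn (fun p => (η p) ^ 2) Ω) :
    ∀ R ∈ Ioo (0 : ℝ) 1,
      ∫ p in Ω ∩ {q : ℝ × ℝ | q.1 < -1 + R}, (η p) ^ 2 ≤
        16 * R ^ 4 * ∫ p in Ω ∩ {q : ℝ × ℝ | q.1 < -1 + R},
          (deriv (fun s => η (p.1, s)) p.2) ^ 2 := by
  intro R hR
  obtain ⟨hR0, hR1⟩ := hR
  have hfe : f = fun t => (t - 1) ^ 2 * (t + 1) ^ 2 := funext hf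
  have hfc : Continuous f := by rw [hfe]; continuity
  have hΩo : IsOpen Ω := by
    rw [hΩ]
    exact (isOpen_lt continuous_const continuous_fst).inter
      ((isOpen_lt continuous_fst continuous_const).inter
        ((isOpen_lt ((hfc.comp continuous_fst).neg) continuous_snd).inter
          (isOpen_lt continuous_snd (hfc.comp continuous_fst))))
  set I : Set ℝ := Ioo (-1) (-1 + R) with hIdef
  have hI : MeasurableSet I := measurableSet_Ioo
  set S : Set (ℝ × ℝ) := {p : ℝ × ℝ | p.1 ∈ I ∧ -f p.1 < p.2 ∧ p.2 < f p.1} with hSdef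
  have hSeq : Ω ∩ {q : ℝ × ℝ | q.1 < -1 + R} = S := by
    rw [hΩ]; ext p
    simp only [hSdef, hIdef, mem_inter_iff, mem_setOf_eq, mem_Ioo]
    constructor
    · rintro ⟨⟨h1, h2, h3, h4⟩, h5⟩; exact ⟨⟨h1, h5⟩, h3, h4⟩
    · rintro ⟨⟨h1, h5⟩, h3, h4⟩; exact ⟨⟨h1, by linarith, h3, h4⟩, h5⟩
  have hSsub : S ⊆ Ω := by rw [← hSeq]; exact inter_subset_left
  rw [hSeq]
  have hG1S : IntegrableOn (fun p : ℝ × ℝ => (η p) ^ 2) S := hint'.mono_set hSsub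
  have hG2S : IntegrableOn (fun p : ℝ × ℝ => (deriv (fun s => η (p.1, s)) p.2) ^ 2) S :=
    hint.mono_set hSsub
  obtain ⟨hEq1, hae1, hA1⟩ := fubini_slice hfc hI hG1S
  obtain ⟨hEq2, hae2, hA2⟩ := fubini_slice hfc hI hG2S
  rw [hEq1, hEq2, ← integral_const_mul]
  refine integral_mono_ae hA1 (hA2.const_mul _) ?_
  filter_upwards [hae1, hae2, ae_restrict_mem hI] with x h1x h2x hxI
  obtain ⟨hx1, hx2⟩ := hxI
  have hx3 : x < 1 := by linarith
  have hfx_pos : 0 < f x := by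
    rw [hfe]
    have ha : 0 < (x - 1) ^ 2 := by
      nlinarith [mul_pos (show (0:ℝ) < 1 - x by linarith) (show (0:ℝ) < 1 - x by linarith)]
    have hb : 0 < (x + 1) ^ 2 := by
      nlinarith [mul_pos (show (0:ℝ) < x + 1 by linarith) (show (0:ℝ) < x + 1 by linarith)]
    exact mul_pos ha hb
  have hfx_le : f x ≤ 4 * R ^ 2 := by
    rw [hfe]
    have ha : (x - 1) ^ 2 ≤ 4 := by
      nlinarith [mul_pos (show (0:ℝ) < 3 - x by linarith) (show (0:ℝ) < 1 + x by linarith)]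
    have hb : (x + 1) ^ 2 ≤ R ^ 2 := by
      nlinarith [mul_pos (show (0:ℝ) < R - (x + 1) by linarith)
        (show (0:ℝ) < R + (x + 1) by linarith)]
    exact mul_le_mul ha hb (sq_nonneg _) (by norm_num)
  have hmem : ∀ y ∈ Ioo (-(f x)) (f x), (x, y) ∈ Ω := by
    intro y hy; rw [hΩ]; exact ⟨hx1, hx3, hy.1, hy.2⟩
  have hfd : ∀ y ∈ Ioo (-(f x)) (f x),
      HasDerivAt (fun s => η (x, s)) ((fderiv ℝ η (x, y)) ((0:ℝ), (1:ℝ))) y := by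
    intro y hy
    have hdiff : DifferentiableAt ℝ η (x, y) :=
      (hη.contDiffAt (hΩo.mem_nhds (hmem y hy))).differentiableAt one_ne_zero
    have hL : HasDerivAt (fun s : ℝ => ((x, s) : ℝ × ℝ)) ((0:ℝ), (1:ℝ)) y :=
      HasDerivAt.prodMk (hasDerivAt_const y x) (hasDerivAt_id y)
    exact hdiff.hasFDerivAt.comp_hasDerivAt y hL
  have hd : ∀ y ∈ Ioo (-(f x)) (f x),
      HasDerivAt (fun s => η (x, s)) (deriv (fun s => η (x, s)) y) y :=
    fun y hy => (hfd y hy).deriv ▸ hfd y hy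
  have hc : ContinuousOn (deriv (fun s => η (x, s))) (Ioo (-(f x)) (f x)) := by
    have hf' : ContinuousOn (fderiv ℝ η) Ω := hη.continuousOn_fderiv_of_isOpen hΩo le_rfl
    have hcomp : ContinuousOn (fun y : ℝ => fderiv ℝ η (x, y)) (Ioo (-(f x)) (f x)) :=
      hf'.comp (Continuous.continuousOn (continuous_const.prodMk continuous_id)) hmem
    have h1 : ContinuousOn (fun y : ℝ => (fderiv ℝ η (x, y)) ((0:ℝ), (1:ℝ)))
        (Ioo (-(f x)) (f x)) :=
      (ContinuousLinearMap.apply ℝ ℝ ((0:ℝ), (1:ℝ))).continuous.comp_continuousOn hcomp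
    exact h1.congr (fun y hy => (hfd y hy).deriv)
  have hkey := slice_bound (fun s => η (x, s)) (f x) hfx_pos hd hc (h0 x ⟨hx1, hx3⟩) h1x h2x
  have hB0 : 0 ≤ ∫ y in Ioo (-(f x)) (f x), (deriv (fun s => η (x, s)) y) ^ 2 :=
    setIntegral_nonneg measurableSet_Ioo (fun _ _ => sq_nonneg _)
  have hcoef : f x ^ 2 ≤ 16 * R ^ 4 := by nlinarith [hfx_pos.le]
  calc (∫ y in Ioo (-(f x)) (f x), (η (x, y)) ^ 2)
      ≤ f x ^ 2 * ∫ y in Ioo (-(f x)) (f x), (deriv (fun s => η (x, s)) y) ^ 2 := hkey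
    _ ≤ 16 * R ^ 4 * ∫ y in Ioo (-(f x)) (f x), (deriv (fun s => η (x, s)) y) ^ 2 :=
        mul_le_mul_of_nonneg_right hcoef hB0
end

section
/- Let φ ∈ H¹(Ω) be a Neumann eigenfunction on the cusp domain Ω with eigenvalue μ² > 0 (i.e., ∫_Ω ∇φ·∇w = μ²∫_Ω φw for all w ∈ H¹(Ω)), and let σ(x) = √((x₁+1)² + x₂²). Assume σ^{-γ-1}φ ∈ L²(Ω) and σ^{-γ}φ ∈ L²(Ω) for some γ ≥ 0. Then σ^{-γ}∇φ ∈ L²(Ω), with the estimate (1/2)∫_Ω |∇φ|²σ^{-2γ} ≤ 2γ²∫_Ω φ²σ^{-2γ-2} + μ²∫_Ω φ²σ^{-2γ}. -/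
open Set MeasureTheory Filter Topology
open scoped ENNReal

/-- Gradient of a function of two real variables. -/
noncomputable def grad2 (u : ℝ × ℝ → ℝ) (x : ℝ × ℝ) : ℝ × ℝ :=
  (fderiv ℝ u x (1, 0), fderiv ℝ u x (0, 1))

/-- Euclidean dot product on ℝ². -/
def dot2 (p q : ℝ × ℝ) : ℝ := p.1 * q.1 + p.2 * q.2

/-- The weight σ(x₁,x₂) = √((x₁+1)² + x₂²). -/
noncomputable def sig2 (p : ℝ × ℝ) : ℝ := Real.sqrt ((p.1 + 1) ^ 2 + p.2 ^ 2)

lemma l2_mul_integrable {ν : Measure (ℝ × ℝ)} {u v : ℝ × ℝ → ℝ}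
    (hu : MemLp u 2 ν) (hv : MemLp v 2 ν) : Integrable (fun p => u p * v p) ν := by
  have h := hv.smul hu (r := 1)
    (hpqr := ⟨by rw [inv_one]; exact ENNReal.inv_two_add_inv_two⟩)
  have h2 := memLp_one_iff_integrable.mp h
  exact h2.congr (Filter.EventuallyEq.of_eq (funext fun p => rfl))

lemma sig_rpow (p : ℝ × ℝ) (e : ℝ) :
    sig2 p ^ e = ((p.1 + 1) ^ 2 + p.2 ^ 2) ^ (e / 2) := by
  have h0 : (0:ℝ) ≤ (p.1 + 1) ^ 2 + p.2 ^ 2 := by positivity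
  have h2 : e / 2 = (1 / 2) * e := by ring
  rw [sig2, Real.sqrt_eq_rpow, h2, Real.rpow_mul h0]
lemma hasFDeriv_w (φ : ℝ × ℝ → ℝ) (hφd : Differentiable ℝ φ) (γ δ : ℝ) (hδ : 0 < δ)
    (p : ℝ × ℝ) :
    HasFDerivAt (fun q => φ q * ((q.1 + 1) ^ 2 + q.2 ^ 2 + δ) ^ (-γ))
      (φ p • ((-γ * ((p.1 + 1) ^ 2 + p.2 ^ 2 + δ) ^ (-γ - 1)) •
          (((p.1 + 1) • ContinuousLinearMap.fst ℝ ℝ ℝ + (p.1 + 1) • ContinuousLinearMap.fst ℝ ℝ ℝ)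
            + (p.2 • ContinuousLinearMap.snd ℝ ℝ ℝ + p.2 • ContinuousLinearMap.snd ℝ ℝ ℝ)))
        + (((p.1 + 1) ^ 2 + p.2 ^ 2 + δ) ^ (-γ)) • fderiv ℝ φ p) p := by
  have ht : 0 < (p.1 + 1) ^ 2 + p.2 ^ 2 + δ := by positivity
  have hx : HasFDerivAt (fun q : ℝ × ℝ => q.1 + 1) (ContinuousLinearMap.fst ℝ ℝ ℝ) p :=
    hasFDerivAt_fst.add_const 1
  have hy : HasFDerivAt (fun q : ℝ × ℝ => q.2) (ContinuousLinearMap.snd ℝ ℝ ℝ) p :=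
    hasFDerivAt_snd
  have hS : HasFDerivAt (fun q : ℝ × ℝ => (q.1 + 1) ^ 2 + q.2 ^ 2 + δ)
      (((p.1 + 1) • ContinuousLinearMap.fst ℝ ℝ ℝ + (p.1 + 1) • ContinuousLinearMap.fst ℝ ℝ ℝ)
        + (p.2 • ContinuousLinearMap.snd ℝ ℝ ℝ + p.2 • ContinuousLinearMap.snd ℝ ℝ ℝ)) p := by
    have := ((hx.mul hx).add (hy.mul hy)).add_const δ
    simpa [pow_two] using this
  have hG : HasFDerivAt (fun q : ℝ × ℝ => ((q.1 + 1) ^ 2 + q.2 ^ 2 + δ) ^ (-γ))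
      ((-γ * ((p.1 + 1) ^ 2 + p.2 ^ 2 + δ) ^ (-γ - 1)) •
        (((p.1 + 1) • ContinuousLinearMap.fst ℝ ℝ ℝ + (p.1 + 1) • ContinuousLinearMap.fst ℝ ℝ ℝ)
          + (p.2 • ContinuousLinearMap.snd ℝ ℝ ℝ + p.2 • ContinuousLinearMap.snd ℝ ℝ ℝ))) p := by
    have h := (Real.hasDerivAt_rpow_const (x := (p.1 + 1) ^ 2 + p.2 ^ 2 + δ) (p := -γ)
      (Or.inl ht.ne')).comp_hasFDerivAt p hS
    exact h
  exact (hφd p).hasFDerivAt.mul hG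

lemma grad2_w (φ : ℝ × ℝ → ℝ) (hφd : Differentiable ℝ φ) (γ δ : ℝ) (hδ : 0 < δ)
    (p : ℝ × ℝ) :
    grad2 (fun q => φ q * ((q.1 + 1) ^ 2 + q.2 ^ 2 + δ) ^ (-γ)) p =
      (((p.1 + 1) ^ 2 + p.2 ^ 2 + δ) ^ (-γ)) • grad2 φ p
      + (φ p * (-γ * ((p.1 + 1) ^ 2 + p.2 ^ 2 + δ) ^ (-γ - 1))) •
          ((2 * (p.1 + 1), 2 * p.2) : ℝ × ℝ) := by
  have h := (hasFDeriv_w φ hφd γ δ hδ p).fderiv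
  simp only [grad2, h]
  simp [ContinuousLinearMap.add_apply, ContinuousLinearMap.smul_apply, Prod.smul_mk,
    Prod.mk_add_mk, smul_eq_mul]
  constructor <;> ring

set_option maxHeartbeats 1000000 in
/-- For a Neumann eigenfunction φ ∈ H¹(Ω) with eigenvalue μ² > 0 on
the cusp domain Ω, if σ^{-γ-1}φ and σ^{-γ}φ ∈ L²(Ω) for some γ ≥ 0, then
σ^{-γ}∇φ ∈ L²(Ω), with
(1/2)∫_Ω |∇φ|²σ^{-2γ} ≤ 2γ²∫_Ω φ²σ^{-2γ-2} + μ²∫_Ω φ²σ^{-2γ}. -/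
theorem stmt14 (f : ℝ → ℝ) (hf : ∀ t, f t = (t - 1) ^ 2 * (t + 1) ^ 2)
    (Ω : Set (ℝ × ℝ))
    (hΩ : Ω = {p : ℝ × ℝ | -1 < p.1 ∧ p.1 < 1 ∧ -f p.1 < p.2 ∧ p.2 < f p.1})
    (μ γ : ℝ) (hμ : 0 < μ) (hγ : 0 ≤ γ)
    (φ : ℝ × ℝ → ℝ) (hφd : Differentiable ℝ φ)
    (hφL2 : MemLp φ 2 (volume.restrict Ω))
    (hφgL2 : MemLp (grad2 φ) 2 (volume.restrict Ω))
    (heig : ∀ w : ℝ × ℝ → ℝ, Differentiable ℝ w →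
      MemLp w 2 (volume.restrict Ω) → MemLp (grad2 w) 2 (volume.restrict Ω) →
      ∫ p in Ω, dot2 (grad2 φ p) (grad2 w p) = μ ^ 2 * ∫ p in Ω, φ p * w p)
    (h1 : IntegrableOn (fun p => (φ p) ^ 2 * (sig2 p) ^ (-(2 * γ) - 2)) Ω)
    (h2 : IntegrableOn (fun p => (φ p) ^ 2 * (sig2 p) ^ (-(2 * γ))) Ω) :
    IntegrableOn (fun p => dot2 (grad2 φ p) (grad2 φ p) * (sig2 p) ^ (-(2 * γ))) Ω ∧
    (1 / 2) * ∫ p in Ω, dot2 (grad2 φ p) (grad2 φ p) * (sig2 p) ^ (-(2 * γ)) ≤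
      2 * γ ^ 2 * (∫ p in Ω, (φ p) ^ 2 * (sig2 p) ^ (-(2 * γ) - 2)) +
        μ ^ 2 * ∫ p in Ω, (φ p) ^ 2 * (sig2 p) ^ (-(2 * γ)) := by
  classical
  -- rewrite sig2 powers into rpow of the squared distance S
  have ex1 : (-(2 * γ) - 2) / 2 = -γ - 1 := by ring
  have ex2 : (-(2 * γ)) / 2 = -γ := by ring
  have e1 : (fun p : ℝ × ℝ => (φ p) ^ 2 * (sig2 p) ^ (-(2 * γ) - 2))
      = fun p => (φ p) ^ 2 * ((p.1 + 1) ^ 2 + p.2 ^ 2) ^ (-γ - 1) := by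
    funext p; rw [sig_rpow, ex1]
  have e2 : (fun p : ℝ × ℝ => (φ p) ^ 2 * (sig2 p) ^ (-(2 * γ)))
      = fun p => (φ p) ^ 2 * ((p.1 + 1) ^ 2 + p.2 ^ 2) ^ (-γ) := by
    funext p; rw [sig_rpow, ex2]
  have e3 : (fun p : ℝ × ℝ => dot2 (grad2 φ p) (grad2 φ p) * (sig2 p) ^ (-(2 * γ)))
      = fun p => dot2 (grad2 φ p) (grad2 φ p) * ((p.1 + 1) ^ 2 + p.2 ^ 2) ^ (-γ) := by
    funext p; rw [sig_rpow, ex2]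
  rw [e1] at h1
  rw [e2] at h2
  rw [e1, e2, e3]
  -- basic facts
  have hfc : Continuous f := by
    have hff : f = fun t => (t - 1) ^ 2 * (t + 1) ^ 2 := funext hf
    rw [hff]; exact ((continuous_id.sub continuous_const).pow 2).mul ((continuous_id.add continuous_const).pow 2)
  have hΩm : MeasurableSet Ω := by
    rw [hΩ]
    simp only [Set.setOf_and]
    refine MeasurableSet.inter ?_ (MeasurableSet.inter ?_ (MeasurableSet.inter ?_ ?_))
    · exact measurableSet_lt measurable_const measurable_fst
    · exact measurableSet_lt measurable_fst measurable_const
    · exact measurableSet_lt ((hfc.measurable.comp measurable_fst).neg) measurable_snd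
    · exact measurableSet_lt measurable_snd (hfc.measurable.comp measurable_fst)
  have hSpos : ∀ p ∈ Ω, 0 < (p.1 + 1) ^ 2 + p.2 ^ 2 := by
    intro p hp
    rw [hΩ] at hp
    have h := hp.1
    nlinarith [sq_nonneg p.2, sq_nonneg (p.1 + 1)]
  have hg1m : Measurable fun p : ℝ × ℝ => (grad2 φ p).1 :=
    measurable_fderiv_apply_const ℝ φ (1, 0)
  have hg2m : Measurable fun p : ℝ × ℝ => (grad2 φ p).2 :=
    measurable_fderiv_apply_const ℝ φ (0, 1)
  have hdotm : Measurable fun p : ℝ × ℝ => dot2 (grad2 φ p) (grad2 φ p) :=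
    (hg1m.mul hg1m).add (hg2m.mul hg2m)
  have hG0 : ∀ p : ℝ × ℝ, 0 ≤ dot2 (grad2 φ p) (grad2 φ p) := fun p =>
    add_nonneg (mul_self_nonneg _) (mul_self_nonneg _)
  have hc1 : MemLp (fun p => (grad2 φ p).1) 2 (volume.restrict Ω) :=
    hφgL2.of_le_mul (c := 1) hg1m.aestronglyMeasurable
      (ae_of_all _ fun p => by simpa using norm_fst_le (grad2 φ p))
  have hc2 : MemLp (fun p => (grad2 φ p).2) 2 (volume.restrict Ω) :=
    hφgL2.of_le_mul (c := 1) hg2m.aestronglyMeasurable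
      (ae_of_all _ fun p => by simpa using norm_snd_le (grad2 φ p))
  have hMφ : MemLp (fun p => ‖grad2 φ p‖ + ‖φ p‖) 2 (volume.restrict Ω) :=
    hφgL2.norm.add hφL2.norm
  -- the key estimate for the regularized weight
  have key : ∀ δ : ℝ, 0 < δ →
      Integrable
        (fun p => dot2 (grad2 φ p) (grad2 φ p) * ((p.1 + 1) ^ 2 + p.2 ^ 2 + δ) ^ (-γ))
        (volume.restrict Ω) ∧
      ∫ p in Ω, dot2 (grad2 φ p) (grad2 φ p) * ((p.1 + 1) ^ 2 + p.2 ^ 2 + δ) ^ (-γ) ≤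
        2 * (2 * γ ^ 2 * (∫ p in Ω, (φ p) ^ 2 * ((p.1 + 1) ^ 2 + p.2 ^ 2) ^ (-γ - 1))
          + μ ^ 2 * ∫ p in Ω, (φ p) ^ 2 * ((p.1 + 1) ^ 2 + p.2 ^ 2) ^ (-γ)) := by
    intro δ hδ
    have htpos : ∀ p : ℝ × ℝ, 0 < (p.1 + 1) ^ 2 + p.2 ^ 2 + δ := fun p => by positivity
    have htδ : ∀ p : ℝ × ℝ, δ ≤ (p.1 + 1) ^ 2 + p.2 ^ 2 + δ := fun p => by
      nlinarith [sq_nonneg (p.1 + 1), sq_nonneg p.2]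
    set w : ℝ × ℝ → ℝ := fun q => φ q * ((q.1 + 1) ^ 2 + q.2 ^ 2 + δ) ^ (-γ) with hwdef
    have hwd : Differentiable ℝ w := fun p => (hasFDeriv_w φ hφd γ δ hδ p).differentiableAt
    have hwgrad := grad2_w φ hφd γ δ hδ
    have hrt0 : ∀ p : ℝ × ℝ, 0 ≤ ((p.1 + 1) ^ 2 + p.2 ^ 2 + δ) ^ (-γ) := fun p =>
      Real.rpow_nonneg (htpos p).le _
    have hrt : ∀ p : ℝ × ℝ, ((p.1 + 1) ^ 2 + p.2 ^ 2 + δ) ^ (-γ) ≤ δ ^ (-γ) := fun p =>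
      Real.rpow_le_rpow_of_nonpos hδ (htδ p) (neg_nonpos.mpr hγ)
    have hv0 : ∀ p : ℝ × ℝ, 0 ≤ ((p.1 + 1) ^ 2 + p.2 ^ 2 + δ) ^ (-γ - 1) := fun p =>
      Real.rpow_nonneg (htpos p).le _
    have htcont : Continuous fun p : ℝ × ℝ => (p.1 + 1) ^ 2 + p.2 ^ 2 + δ :=
      (((continuous_fst.add continuous_const).pow 2).add (continuous_snd.pow 2)).add continuous_const
    have htgcont : Continuous fun p : ℝ × ℝ => ((p.1 + 1) ^ 2 + p.2 ^ 2 + δ) ^ (-γ) :=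
      htcont.rpow_const fun p => Or.inl (htpos p).ne'
    have htg1cont : Continuous fun p : ℝ × ℝ => ((p.1 + 1) ^ 2 + p.2 ^ 2 + δ) ^ (-γ - 1) :=
      htcont.rpow_const fun p => Or.inl (htpos p).ne'
    -- w ∈ L²
    have hwL2 : MemLp w 2 (volume.restrict Ω) := by
      refine hφL2.of_le_mul (c := δ ^ (-γ)) hwd.continuous.aestronglyMeasurable
        (ae_of_all _ fun p => ?_)
      simp only [hwdef, Real.norm_eq_abs, abs_mul]
      rw [abs_of_nonneg (hrt0 p)]
      rw [mul_comm (δ ^ (-γ))]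
      exact mul_le_mul_of_nonneg_left (hrt p) (abs_nonneg _)
    -- grad2 w ∈ L²
    have hwgm : Measurable (grad2 w) :=
      (measurable_fderiv_apply_const ℝ w (1, 0)).prodMk
        (measurable_fderiv_apply_const ℝ w (0, 1))
    have hub : ∀ p : ℝ × ℝ, ‖((2 * (p.1 + 1), 2 * p.2) : ℝ × ℝ)‖ ≤
        2 * ((p.1 + 1) ^ 2 + p.2 ^ 2 + δ) ^ ((1 : ℝ)/2) := by
      intro p
      have hs : ∀ a : ℝ, a ^ 2 ≤ (p.1 + 1) ^ 2 + p.2 ^ 2 + δ →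
          |a| ≤ ((p.1 + 1) ^ 2 + p.2 ^ 2 + δ) ^ ((1 : ℝ)/2) := by
        intro a ha
        rw [← Real.sqrt_eq_rpow, ← Real.sqrt_sq_eq_abs]
        exact Real.sqrt_le_sqrt ha
      rw [Prod.norm_def]
      apply max_le
      · simp only [Real.norm_eq_abs, abs_mul, abs_two]
        have := hs (p.1 + 1) (by nlinarith [sq_nonneg p.2])
        nlinarith [abs_nonneg (p.1 + 1)]
      · simp only [Real.norm_eq_abs, abs_mul, abs_two]
        have := hs p.2 (by nlinarith [sq_nonneg (p.1 + 1)])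
        nlinarith [abs_nonneg p.2]
    have hvhalf : ∀ p : ℝ × ℝ,
        ((p.1 + 1) ^ 2 + p.2 ^ 2 + δ) ^ (-γ - 1) *
          (2 * ((p.1 + 1) ^ 2 + p.2 ^ 2 + δ) ^ ((1 : ℝ)/2)) ≤ 2 * δ ^ (-γ - 1/2) := by
      intro p
      have hmul : ((p.1 + 1) ^ 2 + p.2 ^ 2 + δ) ^ (-γ - 1) *
          ((p.1 + 1) ^ 2 + p.2 ^ 2 + δ) ^ ((1 : ℝ)/2)
          = ((p.1 + 1) ^ 2 + p.2 ^ 2 + δ) ^ (-γ - 1/2) := by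
        rw [← Real.rpow_add (htpos p)]; congr 1; ring
      have hle : ((p.1 + 1) ^ 2 + p.2 ^ 2 + δ) ^ (-γ - 1/2) ≤ δ ^ (-γ - 1/2) :=
        Real.rpow_le_rpow_of_nonpos hδ (htδ p) (by linarith)
      calc ((p.1 + 1) ^ 2 + p.2 ^ 2 + δ) ^ (-γ - 1) *
            (2 * ((p.1 + 1) ^ 2 + p.2 ^ 2 + δ) ^ ((1 : ℝ)/2))
          = 2 * (((p.1 + 1) ^ 2 + p.2 ^ 2 + δ) ^ (-γ - 1) *
              ((p.1 + 1) ^ 2 + p.2 ^ 2 + δ) ^ ((1 : ℝ)/2)) := by ring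
        _ = 2 * ((p.1 + 1) ^ 2 + p.2 ^ 2 + δ) ^ (-γ - 1/2) := by rw [hmul]
        _ ≤ 2 * δ ^ (-γ - 1/2) := by linarith
    have hgwL2 : MemLp (grad2 w) 2 (volume.restrict Ω) := by
      refine hMφ.of_le_mul (c := δ ^ (-γ) + 2 * γ * δ ^ (-γ - 1/2))
        hwgm.aestronglyMeasurable (ae_of_all _ fun p => ?_)
      rw [hwgrad p]
      have hd0 : (0:ℝ) ≤ δ ^ (-γ - 1/2) := Real.rpow_nonneg hδ.le _
      have step1 : ‖(((p.1 + 1) ^ 2 + p.2 ^ 2 + δ) ^ (-γ)) • grad2 φ p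
          + (φ p * (-γ * ((p.1 + 1) ^ 2 + p.2 ^ 2 + δ) ^ (-γ - 1))) •
              ((2 * (p.1 + 1), 2 * p.2) : ℝ × ℝ)‖
          ≤ δ ^ (-γ) * ‖grad2 φ p‖ + |φ p| * γ * (2 * δ ^ (-γ - 1/2)) := by
        refine (norm_add_le _ _).trans ?_
        rw [norm_smul, norm_smul]
        have hsm1 : ‖((p.1 + 1) ^ 2 + p.2 ^ 2 + δ) ^ (-γ)‖ ≤ δ ^ (-γ) := by
          rw [Real.norm_eq_abs, abs_of_nonneg (hrt0 p)]; exact hrt p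
        have hsm2 : ‖φ p * (-γ * ((p.1 + 1) ^ 2 + p.2 ^ 2 + δ) ^ (-γ - 1))‖
            = |φ p| * (γ * ((p.1 + 1) ^ 2 + p.2 ^ 2 + δ) ^ (-γ - 1)) := by
          rw [Real.norm_eq_abs, abs_mul, abs_mul, abs_neg, abs_of_nonneg hγ,
            abs_of_nonneg (hv0 p)]
        have b1 : ‖((p.1 + 1) ^ 2 + p.2 ^ 2 + δ) ^ (-γ)‖ * ‖grad2 φ p‖ ≤
            δ ^ (-γ) * ‖grad2 φ p‖ :=
          mul_le_mul_of_nonneg_right hsm1 (norm_nonneg _)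
        have b2 : ‖φ p * (-γ * ((p.1 + 1) ^ 2 + p.2 ^ 2 + δ) ^ (-γ - 1))‖ *
            ‖((2 * (p.1 + 1), 2 * p.2) : ℝ × ℝ)‖ ≤ |φ p| * γ * (2 * δ ^ (-γ - 1/2)) := by
          rw [hsm2]
          have hc0 : 0 ≤ |φ p| * γ := mul_nonneg (abs_nonneg _) hγ
          calc |φ p| * (γ * ((p.1 + 1) ^ 2 + p.2 ^ 2 + δ) ^ (-γ - 1)) *
                ‖((2 * (p.1 + 1), 2 * p.2) : ℝ × ℝ)‖
              ≤ |φ p| * (γ * ((p.1 + 1) ^ 2 + p.2 ^ 2 + δ) ^ (-γ - 1)) *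
                (2 * ((p.1 + 1) ^ 2 + p.2 ^ 2 + δ) ^ ((1 : ℝ)/2)) := by
                refine mul_le_mul_of_nonneg_left (hub p) ?_
                exact mul_nonneg (abs_nonneg _) (mul_nonneg hγ (hv0 p))
            _ = |φ p| * γ * (((p.1 + 1) ^ 2 + p.2 ^ 2 + δ) ^ (-γ - 1) *
                (2 * ((p.1 + 1) ^ 2 + p.2 ^ 2 + δ) ^ ((1 : ℝ)/2))) := by ring
            _ ≤ |φ p| * γ * (2 * δ ^ (-γ - 1/2)) :=
                mul_le_mul_of_nonneg_left (hvhalf p) hc0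
        linarith
      refine step1.trans ?_
      have hMnn : (0:ℝ) ≤ ‖grad2 φ p‖ + ‖φ p‖ :=
        add_nonneg (norm_nonneg _) (norm_nonneg _)
      rw [Real.norm_eq_abs, abs_of_nonneg hMnn]
      have hd1 : (0:ℝ) ≤ δ ^ (-γ) := Real.rpow_nonneg hδ.le _
      have hd0 : (0:ℝ) ≤ δ ^ (-γ - 1/2) := Real.rpow_nonneg hδ.le _
      rw [show ‖φ p‖ = |φ p| from rfl]
      nlinarith [norm_nonneg (grad2 φ p), abs_nonneg (φ p),
        mul_nonneg hd1 (abs_nonneg (φ p)), mul_nonneg (mul_nonneg hγ hd0) (norm_nonneg (grad2 φ p))]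
    -- the eigenvalue identity applied to w
    have heq := heig w hwd hwL2 hgwL2
    have hφw : (fun p => φ p * w p)
        = fun p => (φ p) ^ 2 * ((p.1 + 1) ^ 2 + p.2 ^ 2 + δ) ^ (-γ) := by
      funext p; simp only [hwdef]; ring
    rw [hφw] at heq
    -- pointwise expansion of dot2 (grad2 φ) (grad2 w)
    have hdotgw : ∀ p : ℝ × ℝ, dot2 (grad2 φ p) (grad2 w p)
        = dot2 (grad2 φ p) (grad2 φ p) * ((p.1 + 1) ^ 2 + p.2 ^ 2 + δ) ^ (-γ)
          - 2 * γ * (φ p) * ((p.1 + 1) ^ 2 + p.2 ^ 2 + δ) ^ (-γ - 1) *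
            ((grad2 φ p).1 * (p.1 + 1) + (grad2 φ p).2 * p.2) := by
      intro p
      rw [hwgrad p]
      simp only [dot2, Prod.fst_add, Prod.snd_add, Prod.smul_fst, Prod.smul_snd,
        smul_eq_mul]
      ring
    -- pointwise inequality
    have hpt : ∀ p : ℝ × ℝ,
        (1/2) * (dot2 (grad2 φ p) (grad2 φ p) * ((p.1 + 1) ^ 2 + p.2 ^ 2 + δ) ^ (-γ))
        ≤ dot2 (grad2 φ p) (grad2 w p)
          + 2 * γ ^ 2 * ((φ p) ^ 2 * ((p.1 + 1) ^ 2 + p.2 ^ 2 + δ) ^ (-γ - 1)) := by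
      intro p
      rw [hdotgw p]
      have hvt : ((p.1 + 1) ^ 2 + p.2 ^ 2 + δ) ^ (-γ)
          = ((p.1 + 1) ^ 2 + p.2 ^ 2 + δ) ^ (-γ - 1) * ((p.1 + 1) ^ 2 + p.2 ^ 2 + δ) := by
        rw [show (-γ : ℝ) - 1 = -γ + (-1) from by ring, Real.rpow_add (htpos p),
          Real.rpow_neg_one]
        field_simp
      have hcs : ((grad2 φ p).1 * (p.1 + 1) + (grad2 φ p).2 * p.2) ^ 2
          ≤ dot2 (grad2 φ p) (grad2 φ p) * ((p.1 + 1) ^ 2 + p.2 ^ 2) := by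
        simp only [dot2]
        nlinarith [sq_nonneg ((grad2 φ p).1 * p.2 - (grad2 φ p).2 * (p.1 + 1))]
      have hkey : 2 * γ * (φ p) * ((grad2 φ p).1 * (p.1 + 1) + (grad2 φ p).2 * p.2)
          ≤ 2 * γ ^ 2 * (φ p) ^ 2
            + dot2 (grad2 φ p) (grad2 φ p) * ((p.1 + 1) ^ 2 + p.2 ^ 2 + δ) / 2 := by
        nlinarith [sq_nonneg (2 * γ * (φ p) - ((grad2 φ p).1 * (p.1 + 1) + (grad2 φ p).2 * p.2)),
          hcs, hG0 p, mul_nonneg (hG0 p) hδ.le]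
      rw [hvt]
      nlinarith [mul_le_mul_of_nonneg_left hkey (hv0 p)]
    -- integrability of the pieces
    have hB1int : Integrable
        (fun p => dot2 (grad2 φ p) (grad2 φ p) * ((p.1 + 1) ^ 2 + p.2 ^ 2 + δ) ^ (-γ))
        (volume.restrict Ω) := by
      have hgg : Integrable (fun p => ‖grad2 φ p‖ * ‖grad2 φ p‖) (volume.restrict Ω) :=
        l2_mul_integrable hφgL2.norm hφgL2.norm
      refine Integrable.mono' (hgg.const_mul (2 * δ ^ (-γ)))
        (hdotm.mul htgcont.measurable).aestronglyMeasurable (ae_of_all _ fun p => ?_)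
      have hbd : dot2 (grad2 φ p) (grad2 φ p) ≤ 2 * (‖grad2 φ p‖ * ‖grad2 φ p‖) := by
        simp only [dot2]
        have hn1 : |(grad2 φ p).1| ≤ ‖grad2 φ p‖ := by simpa using norm_fst_le (grad2 φ p)
        have hn2 : |(grad2 φ p).2| ≤ ‖grad2 φ p‖ := by simpa using norm_snd_le (grad2 φ p)
        have t1 : (grad2 φ p).1 * (grad2 φ p).1 ≤ ‖grad2 φ p‖ * ‖grad2 φ p‖ := by
          rw [← abs_mul_abs_self]
          exact mul_self_le_mul_self (abs_nonneg _) hn1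
        have t2 : (grad2 φ p).2 * (grad2 φ p).2 ≤ ‖grad2 φ p‖ * ‖grad2 φ p‖ := by
          rw [← abs_mul_abs_self]
          exact mul_self_le_mul_self (abs_nonneg _) hn2
        linarith
      rw [Real.norm_eq_abs,
        abs_of_nonneg (mul_nonneg (hG0 p) (hrt0 p))]
      calc dot2 (grad2 φ p) (grad2 φ p) * ((p.1 + 1) ^ 2 + p.2 ^ 2 + δ) ^ (-γ)
          ≤ (2 * (‖grad2 φ p‖ * ‖grad2 φ p‖)) * ((p.1 + 1) ^ 2 + p.2 ^ 2 + δ) ^ (-γ) :=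
            mul_le_mul_of_nonneg_right hbd (hrt0 p)
        _ ≤ (2 * (‖grad2 φ p‖ * ‖grad2 φ p‖)) * δ ^ (-γ) :=
            mul_le_mul_of_nonneg_left (hrt p) (by positivity)
        _ = 2 * δ ^ (-γ) * (‖grad2 φ p‖ * ‖grad2 φ p‖) := by ring
    have hφm : Measurable φ := hφd.continuous.measurable
    have hB3int : Integrable (fun p => (φ p) ^ 2 * ((p.1 + 1) ^ 2 + p.2 ^ 2 + δ) ^ (-γ - 1))
        (volume.restrict Ω) := by
      refine Integrable.mono' h1 ((hφm.pow_const 2).mul htg1cont.measurable).aestronglyMeasurable ?_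
      rw [ae_restrict_iff' hΩm]
      refine ae_of_all _ fun p hp => ?_
      rw [Real.norm_eq_abs, abs_of_nonneg (mul_nonneg (sq_nonneg _) (hv0 p))]
      refine mul_le_mul_of_nonneg_left ?_ (sq_nonneg _)
      exact Real.rpow_le_rpow_of_nonpos (hSpos p hp) (by linarith [htδ p]) (by linarith)
    have hB2'int : Integrable (fun p => (φ p) ^ 2 * ((p.1 + 1) ^ 2 + p.2 ^ 2 + δ) ^ (-γ))
        (volume.restrict Ω) := by
      refine Integrable.mono' h2 ((hφm.pow_const 2).mul htgcont.measurable).aestronglyMeasurable ?_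
      rw [ae_restrict_iff' hΩm]
      refine ae_of_all _ fun p hp => ?_
      rw [Real.norm_eq_abs, abs_of_nonneg (mul_nonneg (sq_nonneg _) (hrt0 p))]
      refine mul_le_mul_of_nonneg_left ?_ (sq_nonneg _)
      exact Real.rpow_le_rpow_of_nonpos (hSpos p hp) (by linarith [htδ p]) (by linarith)
    have hcw1 : MemLp (fun p => (grad2 w p).1) 2 (volume.restrict Ω) :=
      hgwL2.of_le_mul (c := 1) (measurable_fderiv_apply_const ℝ w (1, 0)).aestronglyMeasurable
        (ae_of_all _ fun p => by simpa using norm_fst_le (grad2 w p))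
    have hcw2 : MemLp (fun p => (grad2 w p).2) 2 (volume.restrict Ω) :=
      hgwL2.of_le_mul (c := 1) (measurable_fderiv_apply_const ℝ w (0, 1)).aestronglyMeasurable
        (ae_of_all _ fun p => by simpa using norm_snd_le (grad2 w p))
    have hBwint : Integrable (fun p => dot2 (grad2 φ p) (grad2 w p)) (volume.restrict Ω) :=
      (l2_mul_integrable hc1 hcw1).add (l2_mul_integrable hc2 hcw2)
    -- integrate the pointwise inequality
    have step1 : ∫ p in Ω,
        (1/2) * (dot2 (grad2 φ p) (grad2 φ p) * ((p.1 + 1) ^ 2 + p.2 ^ 2 + δ) ^ (-γ))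
        ≤ ∫ p in Ω, (dot2 (grad2 φ p) (grad2 w p)
            + 2 * γ ^ 2 * ((φ p) ^ 2 * ((p.1 + 1) ^ 2 + p.2 ^ 2 + δ) ^ (-γ - 1))) :=
      integral_mono (hB1int.const_mul _) (hBwint.add (hB3int.const_mul _)) hpt
    rw [integral_add hBwint (hB3int.const_mul _), integral_const_mul, integral_const_mul,
      heq] at step1
    have hle2 : ∫ p in Ω, (φ p) ^ 2 * ((p.1 + 1) ^ 2 + p.2 ^ 2 + δ) ^ (-γ)
        ≤ ∫ p in Ω, (φ p) ^ 2 * ((p.1 + 1) ^ 2 + p.2 ^ 2) ^ (-γ) := by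
      refine setIntegral_mono_on hB2'int h2 hΩm fun p hp => ?_
      refine mul_le_mul_of_nonneg_left ?_ (sq_nonneg _)
      exact Real.rpow_le_rpow_of_nonpos (hSpos p hp) (by linarith [htδ p]) (by linarith)
    have hle1 : ∫ p in Ω, (φ p) ^ 2 * ((p.1 + 1) ^ 2 + p.2 ^ 2 + δ) ^ (-γ - 1)
        ≤ ∫ p in Ω, (φ p) ^ 2 * ((p.1 + 1) ^ 2 + p.2 ^ 2) ^ (-γ - 1) := by
      refine setIntegral_mono_on hB3int h1 hΩm fun p hp => ?_
      refine mul_le_mul_of_nonneg_left ?_ (sq_nonneg _)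
      exact Real.rpow_le_rpow_of_nonpos (hSpos p hp) (by linarith [htδ p]) (by linarith)
    refine ⟨hB1int, ?_⟩
    have hμ2 : (0:ℝ) ≤ μ ^ 2 := sq_nonneg μ
    have hγ2 : (0:ℝ) ≤ 2 * γ ^ 2 := by positivity
    have m1 := mul_le_mul_of_nonneg_left hle2 hμ2
    have m2 := mul_le_mul_of_nonneg_left hle1 hγ2
    linarith
  -- monotone convergence as δ = 1/(n+1) → 0
  have hseqpos : ∀ n : ℕ, 0 < (1:ℝ) / (n + 1) := fun n => by positivity
  have hgn := fun n : ℕ => key (1 / (n + 1)) (hseqpos n)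
  have hgmono : ∀ p : ℝ × ℝ, Monotone fun n : ℕ =>
      dot2 (grad2 φ p) (grad2 φ p) * ((p.1 + 1) ^ 2 + p.2 ^ 2 + 1 / (n + 1)) ^ (-γ) := by
    intro p n m hnm
    refine mul_le_mul_of_nonneg_left ?_ (hG0 p)
    refine Real.rpow_le_rpow_of_nonpos (by positivity) ?_ (neg_nonpos.mpr hγ)
    have hx : (1:ℝ) / (m + 1) ≤ 1 / (n + 1) := by
      apply one_div_le_one_div_of_le
      · positivity
      · have : (n:ℝ) ≤ m := Nat.cast_le.mpr hnm
        linarith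
    linarith
  have htend : ∀ p ∈ Ω, Tendsto
      (fun n : ℕ => dot2 (grad2 φ p) (grad2 φ p) * ((p.1 + 1) ^ 2 + p.2 ^ 2 + 1 / (n + 1)) ^ (-γ))
      atTop (𝓝 (dot2 (grad2 φ p) (grad2 φ p) * ((p.1 + 1) ^ 2 + p.2 ^ 2) ^ (-γ))) := by
    intro p hp
    refine Tendsto.const_mul _ ?_
    have hbase : Tendsto (fun n : ℕ => (p.1 + 1) ^ 2 + p.2 ^ 2 + 1 / (n + 1)) atTop
        (𝓝 ((p.1 + 1) ^ 2 + p.2 ^ 2)) := by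
      have h0 := tendsto_one_div_add_atTop_nhds_zero_nat (𝕜 := ℝ)
      have := tendsto_const_nhds (x := (p.1 + 1) ^ 2 + p.2 ^ 2) (f := atTop (α := ℕ)) |>.add h0
      simpa using this
    exact ((Real.continuousAt_rpow_const _ _ (Or.inl (hSpos p hp).ne')).tendsto.comp hbase)
  have hgnm : ∀ n : ℕ, AEStronglyMeasurable
      (fun p : ℝ × ℝ => dot2 (grad2 φ p) (grad2 φ p) * ((p.1 + 1) ^ 2 + p.2 ^ 2 + 1 / (n + 1)) ^ (-γ))
      (volume.restrict Ω) := fun n => (hgn n).1.aestronglyMeasurable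
  have hF0m : AEStronglyMeasurable
      (fun p : ℝ × ℝ => dot2 (grad2 φ p) (grad2 φ p) * ((p.1 + 1) ^ 2 + p.2 ^ 2) ^ (-γ))
      (volume.restrict Ω) :=
    aestronglyMeasurable_of_tendsto_ae atTop hgnm
      ((ae_restrict_iff' hΩm).mpr (ae_of_all _ fun p hp => htend p hp))
  have hgn0 : ∀ (n : ℕ) (p : ℝ × ℝ),
      0 ≤ dot2 (grad2 φ p) (grad2 φ p) * ((p.1 + 1) ^ 2 + p.2 ^ 2 + 1 / (n + 1)) ^ (-γ) :=
    fun n p => mul_nonneg (hG0 p) (Real.rpow_nonneg (by positivity) _)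
  have hF00 : ∀ p : ℝ × ℝ,
      0 ≤ dot2 (grad2 φ p) (grad2 φ p) * ((p.1 + 1) ^ 2 + p.2 ^ 2) ^ (-γ) :=
    fun p => mul_nonneg (hG0 p) (Real.rpow_nonneg (by positivity) _)
  set C : ℝ := 2 * γ ^ 2 * (∫ p in Ω, (φ p) ^ 2 * ((p.1 + 1) ^ 2 + p.2 ^ 2) ^ (-γ - 1))
      + μ ^ 2 * ∫ p in Ω, (φ p) ^ 2 * ((p.1 + 1) ^ 2 + p.2 ^ 2) ^ (-γ) with hC
  have hmct := lintegral_tendsto_of_tendsto_of_monotone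
    (f := fun n p => ENNReal.ofReal
      (dot2 (grad2 φ p) (grad2 φ p) * ((p.1 + 1) ^ 2 + p.2 ^ 2 + 1 / (n + 1)) ^ (-γ)))
    (F := fun p => ENNReal.ofReal
      (dot2 (grad2 φ p) (grad2 φ p) * ((p.1 + 1) ^ 2 + p.2 ^ 2) ^ (-γ)))
    (μ := volume.restrict Ω)
    (fun n => ((hgnm n).aemeasurable).ennreal_ofReal)
    (ae_of_all _ fun p n m hnm => ENNReal.ofReal_le_ofReal (hgmono p hnm))
    ((ae_restrict_iff' hΩm).mpr (ae_of_all _ fun p hp =>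
      (ENNReal.continuous_ofReal.tendsto _).comp (htend p hp)))
  have hofReal : ∀ n : ℕ, ∫⁻ p in Ω, ENNReal.ofReal
      (dot2 (grad2 φ p) (grad2 φ p) * ((p.1 + 1) ^ 2 + p.2 ^ 2 + 1 / (n + 1)) ^ (-γ))
      = ENNReal.ofReal (∫ p in Ω,
        dot2 (grad2 φ p) (grad2 φ p) * ((p.1 + 1) ^ 2 + p.2 ^ 2 + 1 / (n + 1)) ^ (-γ)) :=
    fun n => (ofReal_integral_eq_lintegral_ofReal (hgn n).1 (ae_of_all _ fun p => hgn0 n p)).symm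
  have hbd : ∫⁻ p in Ω, ENNReal.ofReal
      (dot2 (grad2 φ p) (grad2 φ p) * ((p.1 + 1) ^ 2 + p.2 ^ 2) ^ (-γ))
      ≤ ENNReal.ofReal (2 * C) := by
    refine le_of_tendsto hmct (Filter.Eventually.of_forall fun n => ?_)
    rw [hofReal n]
    exact ENNReal.ofReal_le_ofReal (hgn n).2
  have hF0int : Integrable
      (fun p : ℝ × ℝ => dot2 (grad2 φ p) (grad2 φ p) * ((p.1 + 1) ^ 2 + p.2 ^ 2) ^ (-γ))
      (volume.restrict Ω) := by
    refine ⟨hF0m, ?_⟩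
    rw [hasFiniteIntegral_iff_norm]
    have heqn : ∀ p : ℝ × ℝ, ENNReal.ofReal
        ‖dot2 (grad2 φ p) (grad2 φ p) * ((p.1 + 1) ^ 2 + p.2 ^ 2) ^ (-γ)‖
        = ENNReal.ofReal (dot2 (grad2 φ p) (grad2 φ p) * ((p.1 + 1) ^ 2 + p.2 ^ 2) ^ (-γ)) := by
      intro p
      rw [Real.norm_eq_abs, abs_of_nonneg (hF00 p)]
    calc ∫⁻ p in Ω, ENNReal.ofReal
          ‖dot2 (grad2 φ p) (grad2 φ p) * ((p.1 + 1) ^ 2 + p.2 ^ 2) ^ (-γ)‖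
        = ∫⁻ p in Ω, ENNReal.ofReal
          (dot2 (grad2 φ p) (grad2 φ p) * ((p.1 + 1) ^ 2 + p.2 ^ 2) ^ (-γ)) :=
          lintegral_congr fun p => heqn p
      _ ≤ ENNReal.ofReal (2 * C) := hbd
      _ < ⊤ := ENNReal.ofReal_lt_top
  have hlim := integral_tendsto_of_tendsto_of_monotone (fun n => (hgn n).1) hF0int
    (ae_of_all _ hgmono)
    ((ae_restrict_iff' hΩm).mpr (ae_of_all _ fun p hp => htend p hp))
  have hfin : ∫ p in Ω, dot2 (grad2 φ p) (grad2 φ p) * ((p.1 + 1) ^ 2 + p.2 ^ 2) ^ (-γ)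
      ≤ 2 * C :=
    le_of_tendsto hlim (Filter.Eventually.of_forall fun n => (hgn n).2)
  exact ⟨hF0int, by linarith⟩
end
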